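/- If R is an integral domain such that R_M is Archimedean for every maximal ideal M, and every maximal ideal of R is invertible, then R is a Dedekind domain. -/

import Mathlib

open Ideal

/-- Cohen's theorem: if every prime ideal is finitely generated, the ring is Noetherian. -/
theorem my_cohen {R : Type*} [CommRing R] (H : ∀ P : Ideal R, P.IsPrime → P.FG) :
    IsNoetherianRing R := by
  classical
  rw [isNoetherianRing_iff_ideal_fg]
  by_contra hc
  push_neg at hc
  obtain ⟨J, hJ⟩ := hc
  obtain ⟨I, -, hI⟩ := zorn_le_nonempty₀ {I : Ideal R | ¬ I.FG} (fun c hc hchain y hy => by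
    refine ⟨sSup c, ?_, fun z hz => le_sSup hz⟩
    rintro ⟨s, hs⟩
    have hmem : ∀ x ∈ (s : Set R), ∃ J ∈ c, x ∈ J := fun x hx => by
      have hx' : x ∈ sSup c := hs ▸ Ideal.subset_span hx
      exact (Submodule.mem_sSup_of_directed ⟨y, hy⟩ hchain.directedOn).1 hx'
    have claim : ∀ s' : Finset R, (∀ x ∈ (s' : Set R), ∃ J ∈ c, x ∈ J) →
        ∃ J ∈ c, (s' : Set R) ⊆ J := by
      classical
      intro s'
      induction s' using Finset.induction_on with
      | empty => exact fun _ => ⟨y, hy, by simp⟩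
      | @insert a s'' ha ih =>
        intro hmem'
        obtain ⟨J1, hJ1, hsJ1⟩ := ih (fun x hx => hmem' x (by simp [hx]))
        obtain ⟨J2, hJ2, haJ2⟩ := hmem' a (by simp)
        obtain ⟨J3, hJ3, h13, h23⟩ := hchain.directedOn J1 hJ1 J2 hJ2
        refine ⟨J3, hJ3, fun x hx => ?_⟩
        rcases Finset.mem_insert.mp (by exact_mod_cast hx) with rfl | hx'
        · exact h23 haJ2
        · exact h13 (hsJ1 hx')
    obtain ⟨J', hJ'c, hsJ'⟩ := claim s hmem
    have heq : sSup c = J' := le_antisymm (by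
        rw [← hs]; exact Ideal.span_le.2 hsJ') (le_sSup hJ'c)
    exact hc hJ'c ⟨s, by rw [hs, heq]⟩) J hJ
  have Imax : ∀ J : Ideal R, I < J → J.FG := fun J hJ' => by
    by_contra h; exact hI.not_prop_of_gt hJ' h
  have hne : I ≠ ⊤ := fun h => hI.prop (h ▸ ⟨{1}, by simp⟩)
  refine hI.prop (H I ⟨hne, fun {x y} hxy => or_iff_not_imp_left.mpr fun hx => ?_⟩)
  -- `I ⊔ span {x}` is strictly bigger, hence f.g.
  obtain ⟨s, hs⟩ : (I ⊔ Ideal.span {x}).FG :=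
    Imax _ (left_lt_sup.mpr (mt I.span_singleton_le_iff_mem.mp hx))
  set C := I.colon (Ideal.span {x}) with hC
  have hIC : I ≤ C := fun r hr => Ideal.mem_colon_span_singleton.2 (I.mul_mem_right x hr)
  by_contra hy
  have hCfg : C.FG := Imax _ (lt_of_le_of_ne hIC (fun h => hy
    (h ▸ Ideal.mem_colon_span_singleton.2 (by rwa [mul_comm] at hxy))))
  -- decompose generators
  have hdec : ∀ g ∈ s, ∃ i ∈ I, ∃ a : R, i + a * x = g := by
    intro g hg
    have : g ∈ I ⊔ Ideal.span {x} := hs ▸ Ideal.subset_span hg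
    obtain ⟨i, hi, z, hz, hizg⟩ := Submodule.mem_sup.mp this
    obtain ⟨a, ha⟩ := Ideal.mem_span_singleton'.mp hz
    exact ⟨i, hi, a, by rw [ha, hizg]⟩
  classical
  choose! i hiI a hia using hdec
  have EQ : I = Ideal.span ↑(s.image i) ⊔ Ideal.span {x} * C := by
    apply le_antisymm
    · intro z hz
      have hz' : z ∈ Ideal.span (s : Set R) := by
        rw [hs]; exact Ideal.mem_sup_left hz
      obtain ⟨f, -, hf⟩ := Submodule.mem_span_finset.mp hz'
      have hrw : z = (∑ g ∈ s, f g * i g) + (∑ g ∈ s, f g * a g) * x := by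
        rw [← hf, Finset.sum_mul, ← Finset.sum_add_distrib]
        refine Finset.sum_congr rfl fun g hg => ?_
        calc f g • g = f g * g := by rw [smul_eq_mul]
          _ = f g * (i g + a g * x) := by rw [hia g hg]
          _ = f g * i g + f g * a g * x := by ring
      have hw : (∑ g ∈ s, f g * i g) ∈ Ideal.span (↑(s.image i) : Set R) :=
        Submodule.sum_mem _ fun g hg => Ideal.mul_mem_left _ _
          (Ideal.subset_span (Finset.mem_coe.mpr (Finset.mem_image_of_mem i hg)))
      have hwI : (∑ g ∈ s, f g * i g) ∈ I :=
        Submodule.sum_mem _ fun g hg => I.mul_mem_left _ (hiI g hg)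
      have hb : (∑ g ∈ s, f g * a g) ∈ C := by
        refine Ideal.mem_colon_span_singleton.2 ?_
        have : (∑ g ∈ s, f g * a g) * x = z - (∑ g ∈ s, f g * i g) := by
          rw [hrw]; ring
        rw [this]
        exact I.sub_mem hz hwI
      have : (∑ g ∈ s, f g * a g) * x ∈ Ideal.span {x} * C := by
        rw [mul_comm (∑ g ∈ s, f g * a g) x]
        exact Submodule.mul_mem_mul (Ideal.mem_span_singleton_self x) hb
      rw [hrw]
      exact Submodule.add_mem _ (Ideal.mem_sup_left hw) (Ideal.mem_sup_right this)
    · refine sup_le (Ideal.span_le.2 ?_) (Ideal.mul_le.2 fun r hr c hc => ?_)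
      · intro z hz
        simp only [Finset.coe_image, Set.mem_image, Finset.mem_coe] at hz
        obtain ⟨g, hg, rfl⟩ := hz
        exact hiI g hg
      · obtain ⟨b, hb⟩ := Ideal.mem_span_singleton'.mp hr
        have hcx : c * x ∈ I := by simpa [smul_eq_mul] using Ideal.mem_colon_span_singleton.1 hc
        rw [← hb, mul_assoc, mul_comm x c]
        exact I.mul_mem_left b hcx
  exact hI.prop (by
    rw [EQ]
    exact Submodule.FG.sup ⟨s.image i, rfl⟩ (Submodule.FG.mul ⟨{x}, by simp⟩ hCfg))

/-- A local domain whose maximal ideal is principal and Archimedean is a principal ideal ring. -/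
theorem my_pir {S : Type*} [CommRing S] [IsDomain S] [IsLocalRing S] {t : S}
    (ht : IsLocalRing.maximalIdeal S = Ideal.span {t})
    (hArch : ∀ r : S, ¬IsUnit r → (⨅ n : ℕ, Ideal.span {r ^ (n + 1)}) = ⊥) :
    IsPrincipalIdealRing S := by
  classical
  have htu : ¬ IsUnit t := fun h =>
    (IsLocalRing.maximalIdeal.isMaximal S).ne_top (ht.trans (Ideal.span_singleton_eq_top.mpr h))
  have factor : ∀ x : S, x ≠ 0 → ∃ (n : ℕ) (u : S), IsUnit u ∧ x = u * t ^ n := by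
    intro x hx
    by_cases hxu : IsUnit x
    · exact ⟨0, x, hxu, by simp⟩
    have hx1 : x ∈ Ideal.span {t} := ht ▸ (IsLocalRing.mem_maximalIdeal x).mpr (mem_nonunits_iff.mpr hxu)
    have hex : ∃ m, x ∉ Ideal.span {t ^ (m + 1)} := by
      by_contra! hall
      have : x ∈ (⨅ n : ℕ, Ideal.span {t ^ (n + 1)}) := (Submodule.mem_iInf _).mpr hall
      rw [hArch t htu] at this
      exact hx this
    have hn1 : x ∉ Ideal.span {t ^ (Nat.find hex + 1)} := Nat.find_spec hex
    have hn2 : x ∈ Ideal.span {t ^ (Nat.find hex)} := by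
      rcases Nat.eq_zero_or_pos (Nat.find hex) with h0 | hpos
      · rw [h0, pow_zero, Ideal.span_singleton_one]; exact Submodule.mem_top
      · obtain ⟨m, hm⟩ := Nat.exists_eq_add_of_lt hpos
        have hmlt : m < Nat.find hex := by omega
        have := Nat.find_min hex hmlt
        rw [not_not] at this
        have hms : m + 1 = Nat.find hex := by omega
        rwa [hms] at this
    obtain ⟨c, hc⟩ := Ideal.mem_span_singleton'.mp hn2
    refine ⟨Nat.find hex, c, ?_, hc.symm⟩
    by_contra hcu
    have hct : c ∈ Ideal.span {t} := ht ▸ (IsLocalRing.mem_maximalIdeal c).mpr (mem_nonunits_iff.mpr hcu)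
    obtain ⟨d, hd⟩ := Ideal.mem_span_singleton'.mp hct
    have hd2 : d * t ^ (Nat.find hex + 1) = c * t ^ (Nat.find hex) := by
      rw [pow_succ, ← hd]; ring
    exact hn1 (Ideal.mem_span_singleton'.mpr ⟨d, hd2.trans hc⟩)
  constructor
  intro I
  by_cases hI : I = ⊥
  · exact hI ▸ ⟨⟨0, (Ideal.span_zero).symm⟩⟩
  obtain ⟨x, hxI, hx0⟩ := Submodule.exists_mem_ne_zero_of_ne_bot hI
  obtain ⟨n, u, hu, rfl⟩ := factor x hx0
  have hpow : ∀ (k : ℕ) (v : S), IsUnit v → v * t ^ k ∈ I → t ^ k ∈ I := by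
    intro k v hv hvk
    have := I.mul_mem_left (↑hv.unit⁻¹) hvk
    rwa [← mul_assoc, IsUnit.val_inv_mul, one_mul] at this
  have hex : ∃ m, t ^ m ∈ I := ⟨n, hpow n u hu hxI⟩
  refine ⟨⟨t ^ (Nat.find hex), le_antisymm ?_
    ((Ideal.span_singleton_le_iff_mem _).mpr (Nat.find_spec hex))⟩⟩
  intro y hy
  by_cases hy0 : y = 0
  · simp [hy0]
  obtain ⟨k, v, hv, rfl⟩ := factor y hy0
  have hk : t ^ k ∈ I := hpow k v hv hy
  have hmk : Nat.find hex ≤ k := le_of_not_gt fun h => Nat.find_min hex h hk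
  exact Ideal.mem_span_singleton.mpr (Dvd.dvd.mul_left (pow_dvd_pow t hmk) v)

theorem stmt_5 {R : Type*} [CommRing R] [IsDomain R]
    (hloc : ∀ (M : Ideal R) (hM : M.IsMaximal),
      ∀ r : @Localization.AtPrime R _ M hM.isPrime, ¬IsUnit r →
        (⨅ n : ℕ, Ideal.span {r ^ (n + 1)}) = ⊥)
    (hinv : ∀ M : Ideal R, M.IsMaximal →
      (M : FractionalIdeal (nonZeroDivisors R) (FractionRing R)) *
        (M : FractionalIdeal (nonZeroDivisors R) (FractionRing R))⁻¹ = 1) :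
    IsDedekindDomain R := by
  classical
  set K := FractionRing R
  -- every maximal ideal is nonzero
  have hM0 : ∀ M : Ideal R, M.IsMaximal → M ≠ ⊥ := by
    rintro M hM rfl
    have h := hinv ⊥ hM
    rw [FractionalIdeal.coeIdeal_bot, zero_mul] at h
    exact zero_ne_one h
  -- local principal generator data, purely in R
  have hdata : ∀ (M : Ideal R) (_ : M.IsMaximal),
      ∃ a ∈ M, ∃ c ∉ M, ∀ x ∈ M, ∃ d, c * x = a * d := by
    intro M hM
    have hMne : (M : FractionalIdeal (nonZeroDivisors R) K) ≠ 0 := by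
      exact FractionalIdeal.coeIdeal_ne_zero.mpr (hM0 M hM)
    have h1 : (1 : K) ∈ ((M : FractionalIdeal (nonZeroDivisors R) K) *
        (M : FractionalIdeal (nonZeroDivisors R) K)⁻¹) := by
      rw [hinv M hM]
      exact (FractionalIdeal.mem_one_iff _).mpr ⟨1, map_one _⟩
    have h1' : (1 : K) ∈ ((M : FractionalIdeal (nonZeroDivisors R) K) : Submodule R K) *
        (((M : FractionalIdeal (nonZeroDivisors R) K)⁻¹ : FractionalIdeal (nonZeroDivisors R) K) :
          Submodule R K) := by
      rw [← FractionalIdeal.coe_mul]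
      exact h1
    have hexab : ∃ a' ∈ (M : FractionalIdeal (nonZeroDivisors R) K),
        ∃ b ∈ (M : FractionalIdeal (nonZeroDivisors R) K)⁻¹,
          a' * b ∉ IsLocalization.coeSubmodule K M := by
      by_contra! h
      have hle : ((M : FractionalIdeal (nonZeroDivisors R) K) : Submodule R K) *
          (((M : FractionalIdeal (nonZeroDivisors R) K)⁻¹ :
            FractionalIdeal (nonZeroDivisors R) K) : Submodule R K) ≤
          IsLocalization.coeSubmodule K M :=
        Submodule.mul_le.2 h
      have h1M := hle h1'
      obtain ⟨m, hm, hm1⟩ := h1M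
      have : m = 1 := by
        apply IsFractionRing.injective R K
        rw [map_one]
        simpa using hm1
      exact hM.ne_top (Ideal.eq_top_of_isUnit_mem _ (this ▸ hm) isUnit_one)
    obtain ⟨a', ha', b, hb, hab⟩ := hexab
    obtain ⟨a, haM, rfl⟩ := (FractionalIdeal.mem_coeIdeal _).mp ha'
    have habmem : algebraMap R K a * b ∈ (1 : FractionalIdeal (nonZeroDivisors R) K) := by
      rw [← hinv M hM]
      exact FractionalIdeal.mul_mem_mul ha' hb
    obtain ⟨c, hc⟩ := (FractionalIdeal.mem_one_iff _).mp habmem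
    have hcM : c ∉ M := fun h => hab ⟨c, h, hc⟩
    refine ⟨a, haM, c, hcM, fun x hx => ?_⟩
    have hxb : b * algebraMap R K x ∈ (1 : FractionalIdeal (nonZeroDivisors R) K) :=
      (FractionalIdeal.mem_inv_iff hMne).mp hb _
        ((FractionalIdeal.mem_coeIdeal _).mpr ⟨x, hx, rfl⟩)
    obtain ⟨d, hd⟩ := (FractionalIdeal.mem_one_iff _).mp hxb
    refine ⟨d, IsFractionRing.injective R K ?_⟩
    rw [_root_.map_mul, _root_.map_mul, hd, ← mul_assoc, ← hc]
  -- localizations are principal ideal rings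
  have key : ∀ (M : Ideal R) (hM : M.IsMaximal), IsPrincipalIdealRing (Localization.AtPrime M) := by
    intro M hM
    haveI := hM.isPrime
    obtain ⟨a, haM, c, hcM, hrel⟩ := hdata M hM
    set S := Localization.AtPrime M with hS
    have hcu : IsUnit (algebraMap R S c) := IsLocalization.map_units S ⟨c, show c ∈ M.primeCompl from hcM⟩
    have hmax : IsLocalRing.maximalIdeal S = Ideal.span {algebraMap R S a} := by
      rw [← Localization.AtPrime.map_eq_maximalIdeal]
      apply le_antisymm
      · rw [Ideal.map_le_iff_le_comap]
        intro x hx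
        obtain ⟨d, hd⟩ := hrel x hx
        have hmul : algebraMap R S c * algebraMap R S x
            = algebraMap R S a * algebraMap R S d := by
          rw [← _root_.map_mul, ← _root_.map_mul, hd]
        show algebraMap R S x ∈ Ideal.span {algebraMap R S a}
        rw [Ideal.mem_span_singleton]
        have hdvd : algebraMap R S a ∣ algebraMap R S c * algebraMap R S x :=
          ⟨algebraMap R S d, hmul⟩
        exact hcu.dvd_mul_left.mp hdvd
      · rw [Ideal.span_singleton_le_iff_mem]
        exact Ideal.mem_map_of_mem _ haM
    exact my_pir hmax (hloc M hM)
  -- dimension ≤ 1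
  haveI dim1 : Ring.DimensionLEOne R := by
    constructor
    intro P hP0 hP
    obtain ⟨M, hM, hPM⟩ := Ideal.exists_le_maximal P hP.ne_top
    haveI := hM.isPrime
    haveI := key M hM
    set S := Localization.AtPrime M with hS
    have hdisj : Disjoint (M.primeCompl : Set R) (P : Set R) :=
      Set.disjoint_left.mpr fun x hx hxP => hx (hPM hxP)
    have hP' : (P.map (algebraMap R S)).IsPrime :=
      IsLocalization.isPrime_of_isPrime_disjoint M.primeCompl S P hP hdisj
    have hP'0 : P.map (algebraMap R S) ≠ ⊥ := by
      obtain ⟨x, hxP, hx0⟩ := Submodule.exists_mem_ne_zero_of_ne_bot hP0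
      intro h
      have hx : algebraMap R S x ∈ P.map (algebraMap R S) := Ideal.mem_map_of_mem _ hxP
      rw [h, Ideal.mem_bot] at hx
      exact hx0 (IsLocalization.injective S M.primeCompl_le_nonZeroDivisors
        (by rw [hx, map_zero]))
    have hP'max : (P.map (algebraMap R S)).IsMaximal := by
      haveI := hP'
      exact IsPrime.to_maximal_ideal hP'0
    have hcomap : P = M := by
      have h1 : (P.map (algebraMap R S)).comap (algebraMap R S) = P :=
        IsLocalization.under_map_of_isPrime_disjoint M.primeCompl S hP hdisj
      have h2 : P.map (algebraMap R S) = IsLocalRing.maximalIdeal S :=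
        IsLocalRing.eq_maximalIdeal hP'max
      rw [← h1, h2]; exact Localization.AtPrime.under_maximalIdeal
    exact hcomap ▸ hM
  -- integrally closed
  haveI hic : IsIntegrallyClosed R := by
    apply IsIntegrallyClosed.of_localization_maximal
    intro p _ hpm
    haveI := key p hpm
    infer_instance
  -- Noetherian
  haveI hnoeth : IsNoetherianRing R := by
    apply my_cohen
    intro P hP
    by_cases hP0 : P = ⊥
    · exact hP0 ▸ ⟨∅, by simp⟩
    · have hPmax : P.IsMaximal := hP.isMaximal hP0
      exact Ideal.fg_of_isUnit (IsFractionRing.injective R K) P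
        (isUnit_iff_exists_inv.mpr ⟨_, hinv P hPmax⟩)
  haveI : IsDedekindRing R := ⟨⟩
  infer_instance
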